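/- Sparsity obstruction for the incremental PCA algorithm: let D be the distribution on ℝ² taking value (√3, 0) with probability 1/3 and (0, √2) with probability 2/3. The covariance E[xxᵀ] = diag(1, 4/3), so the maximal eigenvector (for k = 1) is (0,1). Yet if the incremental algorithm (rank-1 projection of the running sum of outer products) is initialized with the first sample, then whenever the first sample is (√3,0), all subsequent rank-1 projections keep the direction (1,0): specifically, the rank-1 projection of t·c·e₁e₁ᵀ + 2·e₂e₂ᵀ equals (t·c)·e₁e₁ᵀ whenever t·c > 2 where c = 3, and a sample (0,√2) never displaces the current eigenvector once the accumulated weight on e₁ exceeds 2. -/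

import Mathlib

open Matrix

/-- Squared Frobenius norm. -/
noncomputable def frobSq (A : Matrix (Fin 2) (Fin 2) ℝ) : ℝ := (Aᵀ * A).trace

lemma frobSq_eq (A : Matrix (Fin 2) (Fin 2) ℝ) :
    frobSq A = A 0 0 ^ 2 + A 0 1 ^ 2 + A 1 0 ^ 2 + A 1 1 ^ 2 := by
  simp [frobSq, Matrix.trace, Matrix.mul_apply, Fin.sum_univ_two]
  ring

lemma diag_eq (a : ℝ) : (!![a, 0; 0, 0] : Matrix (Fin 2) (Fin 2) ℝ) = diagonal ![a, 0] := by
  ext i j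
  fin_cases i <;> fin_cases j <;> simp [diagonal]

lemma rankle2 (a : ℝ) : (!![a, 0; 0, 0] : Matrix (Fin 2) (Fin 2) ℝ).rank ≤ 1 := by
  have h : (!![a, 0; 0, 0] : Matrix (Fin 2) (Fin 2) ℝ) =
      (Matrix.of fun i (_ : Fin 1) => (![a, 0] : Fin 2 → ℝ) i) *
      (Matrix.of fun (_ : Fin 1) j => (![1, 0] : Fin 2 → ℝ) j) := by
    ext i j
    fin_cases i <;> fin_cases j <;> simp [Matrix.mul_apply]
  rw [h]
  exact (Matrix.rank_mul_le_left _ _).trans ((Matrix.rank_le_card_width _).trans (by simp))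

/-- Failure case for the incremental PCA algorithm: for the distribution taking
`(√3,0)` w.p. `1/3` and `(0,√2)` w.p. `2/3`, the covariance is `diag(1, 4/3)` whose
maximal eigenvector is `(0,1)`; yet whenever the accumulated weight `t·c` on `e₁`
(with `c = 3`) exceeds `2`, the rank-1 Frobenius projection of
`t·c·e₁e₁ᵀ + 2·e₂e₂ᵀ` is `t·c·e₁e₁ᵀ`, so a sample `(0,√2)` never displaces `e₁`. -/
theorem stmt17 :
    ((1 / 3 : ℝ) • vecMulVec ![Real.sqrt 3, 0] ![Real.sqrt 3, 0] +
        (2 / 3 : ℝ) • vecMulVec ![0, Real.sqrt 2] ![0, Real.sqrt 2] =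
      (!![1, 0; 0, 4 / 3] : Matrix (Fin 2) (Fin 2) ℝ)) ∧
    ((!![1, 0; 0, 4 / 3] : Matrix (Fin 2) (Fin 2) ℝ) *ᵥ ![0, 1] =
      (4 / 3 : ℝ) • ![0, 1]) ∧
    ((1 : ℝ) < 4 / 3) ∧
    (∀ t c : ℝ, c = 3 → 2 < t * c →
      (!![t * c, 0; 0, 0] : Matrix (Fin 2) (Fin 2) ℝ).PosSemidef ∧
      (!![t * c, 0; 0, 0] : Matrix (Fin 2) (Fin 2) ℝ).rank ≤ 1 ∧
      ∀ B : Matrix (Fin 2) (Fin 2) ℝ, B.PosSemidef → B.rank ≤ 1 →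
        frobSq (!![t * c, 0; 0, 0] - !![t * c, 0; 0, 2]) ≤
          frobSq (B - !![t * c, 0; 0, 2])) := by
  have h3 : Real.sqrt 3 * Real.sqrt 3 = 3 := Real.mul_self_sqrt (by norm_num)
  have h2 : Real.sqrt 2 * Real.sqrt 2 = 2 := Real.mul_self_sqrt (by norm_num)
  refine ⟨?_, ?_, by norm_num, ?_⟩
  · ext i j
    fin_cases i <;> fin_cases j <;>
      simp [vecMulVec_apply, h3, h2] <;> ring_nf <;> nlinarith [h3, h2]
  · ext i
    fin_cases i <;> simp [Matrix.mulVec, dotProduct, Fin.sum_univ_two]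
  · intro t c hc ht
    have ha : (0 : ℝ) ≤ t * c := le_of_lt (lt_trans (by norm_num) ht)
    refine ⟨?_, rankle2 _, ?_⟩
    · rw [diag_eq]
      exact Matrix.PosSemidef.diagonal (by
        intro i; fin_cases i <;> simpa using ha)
    · intro B hB hr
      have hdet : B.det = 0 := by
        by_contra h
        have := Matrix.rank_of_isUnit B ((Matrix.isUnit_iff_isUnit_det B).2 (isUnit_iff_ne_zero.2 h))
        simp [Fintype.card_fin] at this
        omega
      have hsym : B 1 0 = B 0 1 := by
        have := hB.isHermitian
        have h10 := congrFun (congrFun this 1) 0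
        simpa using h10.symm
      have hdet' : B 0 0 * B 1 1 - B 0 1 * B 1 0 = 0 := by
        rw [← Matrix.det_fin_two]; exact hdet
      have h00 : 0 ≤ B 0 0 := by
        have := hB.dotProduct_mulVec_nonneg ![1, 0]
        simpa [Matrix.mulVec, dotProduct, Fin.sum_univ_two] using this
      have h11 : 0 ≤ B 1 1 := by
        have := hB.dotProduct_mulVec_nonneg ![0, 1]
        simpa [Matrix.mulVec, dotProduct, Fin.sum_univ_two] using this
      rw [frobSq_eq, frobSq_eq]
      simp only [Matrix.sub_apply]
      norm_num
      set p := B 0 0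
      set q := B 0 1
      set r := B 1 1
      rw [hsym] at hdet' ⊢
      -- goal: 4 ≤ (p - t*c)^2 + q^2 + q^2 + (r-2)^2 with q^2 = p*r
      rcases le_or_gt 4 (2 * p + r) with hcase | hcase
      · nlinarith [sq_nonneg (p - t * c), mul_nonneg h11 (by linarith : (0:ℝ) ≤ 2 * p + r - 4)]
      · nlinarith [sq_nonneg (4 - 2 * p - 2 * r),
          mul_nonneg (by linarith : (0:ℝ) ≤ t * c - 2) (by nlinarith [mul_nonneg h11 (by linarith : (0:ℝ) ≤ 4 - 2*p - r), sq_nonneg q] : (0:ℝ) ≤ 2 - p),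
          mul_nonneg (by linarith : (0:ℝ) ≤ t * c - 2) (by linarith : (0:ℝ) ≤ t * c + 2 - 2 * p) ]
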